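/- Let μ, ν, α, λ be real numbers, and define the polynomials R(y) = −(3/2)μ y² + (αμ − ν) y + λ and S(y) = μ y + ν. If the identity S(y)·(2y·S(y) + R(y)) + (2S(y) + 2y·S′(y) + R′(y))·R(y) + 2 = 0 holds for all y ∈ ℝ, then μ = 0 and λν = −1. -/
import Mathlib


/-- the polynomial identity
`S(y)(2y S(y) + R(y)) + (2S(y) + 2y S'(y) + R'(y)) R(y) + 2 = 0` forces
`μ = 0` and `λν = -1`, where `R(y) = -(3/2)μy² + (αμ-ν)y + λ`,
`S(y) = μy + ν`. -/
theorem polynomial_identity_forces_mu_zero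
    (μ ν α lam : ℝ)
    (hid : ∀ y : ℝ,
      (μ * y + ν) * (2 * y * (μ * y + ν)
          + (-(3/2) * μ * y^2 + (α * μ - ν) * y + lam))
        + (2 * (μ * y + ν) + 2 * y * μ + (-(3) * μ * y + (α * μ - ν)))
            * (-(3/2) * μ * y^2 + (α * μ - ν) * y + lam)
        + 2 = 0) :
    μ = 0 ∧ lam * ν = -1 := by
  have h1 := hid 1
  have h1' := hid (-1)
  have h2 := hid 2
  have h2' := hid (-2)
  have hm2 : μ ^ 2 = 0 := by linarith [hid 1, hid (-1), hid 2, hid (-2)]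
  have hm : μ = 0 := by
    nlinarith [sq_nonneg μ]
  have h0 := hid 0
  rw [hm] at h0
  constructor
  · exact hm
  · nlinarith [h0]
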